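/- Graver finiteness criterion (other direction): if the set S = {x ∈ ℤ^n : Ax = b, l ≤ x ≤ u} is infinite, then there exists g in the Graver basis G(A) with g_i ≤ 0 whenever u_i < ∞ and g_i ≥ 0 whenever l_i > −∞. -/

import Mathlib

open Matrix BigOperators

/-- The conformal order on `ℤ^n`. -/
def ConformalLE {n : ℕ} (x y : Fin n → ℤ) : Prop :=
  ∀ i, 0 ≤ x i * y i ∧ |x i| ≤ |y i|

/-- The Graver basis of an integer matrix `A`. -/
def graverBasis {m n : ℕ} (A : Matrix (Fin m) (Fin n) ℤ) : Set (Fin n → ℤ) :=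
  {g | g ≠ 0 ∧ A.mulVec g = 0 ∧
    ∀ y : Fin n → ℤ, y ≠ 0 → A.mulVec y = 0 → ConformalLE y g → y = g}

/-- Integers extended with `±∞`. -/
abbrev Zinf := WithBot (WithTop ℤ)

/-- The canonical embedding of `ℤ` into `ℤ ∪ {±∞}`. -/
def toZinf (z : ℤ) : Zinf := ((z : WithTop ℤ) : Zinf)

/-- The feasible set `{x ∈ ℤ^n : Ax = b, l ≤ x ≤ u}`. -/
def feasibleSet {m n : ℕ} (A : Matrix (Fin m) (Fin n) ℤ) (b : Fin m → ℤ)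
    (l u : Fin n → Zinf) : Set (Fin n → ℤ) :=
  {x | A.mulVec x = b ∧ ∀ i, l i ≤ toZinf (x i) ∧ toZinf (x i) ≤ u i}

lemma toZinf_ne_bot (z : ℤ) : toZinf z ≠ ⊥ := by simp [toZinf]

lemma toZinf_ne_top (z : ℤ) : toZinf z ≠ ⊤ := by simp [toZinf]

lemma toZinf_le_toZinf {a c : ℤ} : toZinf a ≤ toZinf c ↔ a ≤ c := by simp [toZinf]

lemma zinf_exists_int (z : Zinf) (hbot : z ≠ ⊥) (htop : z ≠ ⊤) : ∃ c : ℤ, z = toZinf c := by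
  induction z using WithBot.recBotCoe with
  | bot => exact absurd rfl hbot
  | coe w =>
    induction w using WithTop.recTopCoe with
    | top => exact absurd rfl htop
    | coe c => exact ⟨c, rfl⟩

lemma exists_recession {m n : ℕ} (A : Matrix (Fin m) (Fin n) ℤ)
    (b : Fin m → ℤ) (l u : Fin n → Zinf)
    (hinf : (feasibleSet A b l u).Infinite) :
    ∃ h : Fin n → ℤ, h ≠ 0 ∧ A.mulVec h = 0 ∧
      (∀ i, u i ≠ ⊤ → h i ≤ 0) ∧ (∀ i, l i ≠ ⊥ → 0 ≤ h i) := by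
  classical
  have f := hinf.natEmbedding
  have hmem : ∀ k, (f k : Fin n → ℤ) ∈ feasibleSet A b l u := fun k => (f k).2
  have x0 := hmem 0
  -- upper bound values
  have hcu : ∀ i, u i ≠ ⊤ → ∃ c : ℤ, u i = toZinf c := by
    intro i hi
    refine zinf_exists_int _ (fun hbot => ?_) hi
    have := (x0.2 i).2
    rw [hbot, le_bot_iff] at this
    exact toZinf_ne_bot _ this
  have hcl : ∀ i, l i ≠ ⊥ → ∃ c : ℤ, l i = toZinf c := by
    intro i hi
    refine zinf_exists_int _ hi (fun htop => ?_)
    have := (x0.2 i).1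
    rw [htop, top_le_iff] at this
    exact toZinf_ne_top _ this
  set cu : Fin n → ℤ := fun i => if h : u i ≠ ⊤ then (hcu i h).choose else 0 with hcu_def
  set cl : Fin n → ℤ := fun i => if h : l i ≠ ⊥ then (hcl i h).choose else 0 with hcl_def
  have hub : ∀ k i, u i ≠ ⊤ → (f k : Fin n → ℤ) i ≤ cu i := by
    intro k i hi
    have h1 := ((hmem k).2 i).2
    rw [(hcu i hi).choose_spec] at h1
    have : cu i = (hcu i hi).choose := by simp [hcu_def, hi]
    rw [this]
    exact toZinf_le_toZinf.mp h1
  have hlb : ∀ k i, l i ≠ ⊥ → cl i ≤ (f k : Fin n → ℤ) i := by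
    intro k i hi
    have h1 := ((hmem k).2 i).1
    rw [(hcl i hi).choose_spec] at h1
    have : cl i = (hcl i hi).choose := by simp [hcl_def, hi]
    rw [this]
    exact toZinf_le_toZinf.mp h1
  set F : ℕ → Fin n × Bool → ℕ := fun k p =>
    if p.2 then (cu p.1 - (f k : Fin n → ℤ) p.1).toNat
    else ((f k : Fin n → ℤ) p.1 - cl p.1).toNat with hF_def
  obtain ⟨k1, k2, hk, hle⟩ := (wellQuasiOrdered_le
    (α := Fin n × Bool → ℕ)) F
  refine ⟨(f k2 : Fin n → ℤ) - (f k1 : Fin n → ℤ), ?_, ?_, ?_, ?_⟩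
  · intro h0
    exact hk.ne (f.injective (Subtype.ext (sub_eq_zero.mp h0).symm ▸ rfl))
  · rw [Matrix.mulVec_sub, (hmem k2).1, (hmem k1).1, sub_self]
  · intro i hi
    have h2 := hle (i, true)
    simp only [hF_def, if_true] at h2
    have hxu : (f k1 : Fin n → ℤ) i ≤ cu i := hub k1 i hi
    have hyu : (f k2 : Fin n → ℤ) i ≤ cu i := hub k2 i hi
    have h3 : cu i - (f k1 : Fin n → ℤ) i ≤ cu i - (f k2 : Fin n → ℤ) i := by
      have := Int.ofNat_le.mpr h2
      rwa [Int.toNat_of_nonneg (by omega), Int.toNat_of_nonneg (by omega)] at this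
    simp only [Pi.sub_apply]
    omega
  · intro i hi
    have h2 := hle (i, false)
    simp only [hF_def, if_false, Bool.false_eq_true] at h2
    have hxl : cl i ≤ (f k1 : Fin n → ℤ) i := hlb k1 i hi
    have hyl : cl i ≤ (f k2 : Fin n → ℤ) i := hlb k2 i hi
    have h3 : (f k1 : Fin n → ℤ) i - cl i ≤ (f k2 : Fin n → ℤ) i - cl i := by
      have := Int.ofNat_le.mpr h2
      rwa [Int.toNat_of_nonneg (by omega), Int.toNat_of_nonneg (by omega)] at this
    simp only [Pi.sub_apply]
    omega

lemma conformal_refl {n : ℕ} (h : Fin n → ℤ) : ConformalLE h h :=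
  fun i => ⟨mul_self_nonneg _, le_refl _⟩

lemma conformal_trans {n : ℕ} {x y z : Fin n → ℤ} (h1 : ConformalLE x y)
    (h2 : ConformalLE y z) : ConformalLE x z := by
  intro i
  obtain ⟨ha, hb⟩ := h1 i
  obtain ⟨hc, hd⟩ := h2 i
  refine ⟨?_, hb.trans hd⟩
  by_cases hy : y i = 0
  · have : x i = 0 := by
      have := hb; rw [hy] at this; simpa using this
    simp [this]
  · have hy2 : 0 < y i * y i := mul_self_pos.mpr hy
    have : 0 ≤ (x i * y i) * (y i * z i) := mul_nonneg ha hc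
    have h5 : 0 ≤ (x i * z i) * (y i * y i) := by nlinarith
    exact nonneg_of_mul_nonneg_right (by linarith [h5] : 0 ≤ y i * y i * (x i * z i)) hy2

lemma exists_graver_conformal {m n : ℕ} (A : Matrix (Fin m) (Fin n) ℤ)
    (h : Fin n → ℤ) (hne : h ≠ 0) (hker : A.mulVec h = 0) :
    ∃ g ∈ graverBasis A, ConformalLE g h := by
  classical
  set S : Set ℕ := {k | ∃ y : Fin n → ℤ, (y ≠ 0 ∧ A.mulVec y = 0 ∧ ConformalLE y h) ∧
    ∑ i, (y i).natAbs = k} with hS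
  have hSne : S.Nonempty := ⟨_, h, ⟨hne, hker, conformal_refl h⟩, rfl⟩
  obtain ⟨k, ⟨g, ⟨hg0, hgA, hgh⟩, hgk⟩, hmin⟩ := Nat.lt_wfRel.wf.has_min S hSne
  refine ⟨g, ⟨hg0, hgA, ?_⟩, hgh⟩
  intro y hy0 hyA hyg
  have hyh : ConformalLE y h := conformal_trans hyg hgh
  have hmem : (∑ i, (y i).natAbs) ∈ S := ⟨y, ⟨hy0, hyA, hyh⟩, rfl⟩
  have hk_le : k ≤ ∑ i, (y i).natAbs := not_lt.mp (hmin _ hmem)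
  have hptwise : ∀ i, (y i).natAbs ≤ (g i).natAbs := by
    intro i
    have := (hyg i).2
    rw [Int.abs_eq_natAbs, Int.abs_eq_natAbs] at this
    exact_mod_cast this
  have hall : ∀ i, (y i).natAbs = (g i).natAbs := by
    by_contra hcon
    push_neg at hcon
    obtain ⟨j, hj⟩ := hcon
    have hlt : ∑ i, (y i).natAbs < ∑ i, (g i).natAbs :=
      Finset.sum_lt_sum (fun i _ => hptwise i)
        ⟨j, Finset.mem_univ j, lt_of_le_of_ne (hptwise j) hj⟩
    rw [hgk] at hlt
    omega
  funext i
  have habs : y i = g i ∨ y i = -(g i) := Int.natAbs_eq_natAbs_iff.mp (hall i)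
  rcases habs with heq | heq
  · exact heq
  · by_cases hgi : g i = 0
    · rw [heq, hgi]; ring
    · exfalso
      have h1 := (hyg i).1
      rw [heq] at h1
      have : 0 < g i * g i := mul_self_pos.mpr hgi
      nlinarith


/-- If the feasible set is infinite, some Graver basis element respects the
finite bounds' directions. -/
theorem graver_finiteness_backward {m n : ℕ} (A : Matrix (Fin m) (Fin n) ℤ)
    (b : Fin m → ℤ) (l u : Fin n → Zinf)
    (hinf : (feasibleSet A b l u).Infinite) :
    ∃ g ∈ graverBasis A,
      (∀ i, u i ≠ ⊤ → g i ≤ 0) ∧ (∀ i, l i ≠ ⊥ → 0 ≤ g i) := by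
  obtain ⟨h, hne, hker, hu, hl⟩ := exists_recession A b l u hinf
  obtain ⟨g, hg, hgh⟩ := exists_graver_conformal A h hne hker
  refine ⟨g, hg, ?_, ?_⟩
  · intro i hi
    have hhi := hu i hi
    obtain ⟨h1, h2⟩ := hgh i
    rcases lt_or_eq_of_le hhi with hlt | heq
    · nlinarith
    · rw [heq] at h2
      simp only [abs_zero] at h2
      have : g i = 0 := abs_nonpos_iff.mp h2
      omega
  · intro i hi
    have hhi := hl i hi
    obtain ⟨h1, h2⟩ := hgh i
    rcases lt_or_eq_of_le hhi with hlt | heq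
    · nlinarith
    · rw [← heq] at h2
      simp only [abs_zero] at h2
      have : g i = 0 := abs_nonpos_iff.mp h2
      omega
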